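/- All of Green's relations L, R, H, D, J on the Kiselman semigroup K_n are trivial: any two elements related by any of these relations are equal. -/

import Mathlib

/-- The defining relations of the Kiselman semigroup `K_n`:
`aᵢ² = aᵢ`, and `aᵢaⱼaᵢ = aⱼaᵢaⱼ = aⱼaᵢ` for `i < j`. -/
inductive KisRel (n : ℕ) : FreeMonoid (Fin n) → FreeMonoid (Fin n) → Prop
  | idem (i : Fin n) : KisRel n (.of i * .of i) (.of i)
  | braid₁ {i j : Fin n} (h : i < j) :
      KisRel n (.of i * .of j * .of i) (.of j * .of i)
  | braid₂ {i j : Fin n} (h : i < j) :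
      KisRel n (.of j * .of i * .of j) (.of j * .of i)

/-- The Kiselman semigroup (monoid) `K_n`. -/
abbrev Kiselman (n : ℕ) := PresentedMonoid (KisRel n)

/-- The canonical projection from the free monoid on the generators to `K_n`. -/
def kmk (n : ℕ) : FreeMonoid (Fin n) →* Kiselman n := PresentedMonoid.mk (KisRel n)

/-- The generator `a_{i+1}` (0-indexed: `ka i` is the paper's `a_{i+1}`). -/
def ka {n : ℕ} (i : Fin n) : Kiselman n := PresentedMonoid.of (KisRel n) i

/-- The idempotent `e_X`: the product of the generators indexed by `X` in strictly
decreasing order of indices. -/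
def eX {n : ℕ} (X : Finset (Fin n)) : Kiselman n :=
  kmk n (FreeMonoid.ofList ((X.sort (· ≤ ·)).reverse))

set_option linter.unnecessarySeqFocus false

namespace KisAux

variable {n : ℕ}

/-- word to Kiselman element -/
def km (w : List (Fin n)) : Kiselman n := kmk n (FreeMonoid.ofList w)

@[simp] lemma km_nil : km ([] : List (Fin n)) = 1 := map_one (kmk n)

lemma km_append (a b : List (Fin n)) : km (a ++ b) = km a * km b := by
  unfold km; rw [FreeMonoid.ofList_append, map_mul]

@[simp] lemma km_cons (i : Fin n) (w : List (Fin n)) : km (i :: w) = ka i * km w := by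
  unfold km; rw [FreeMonoid.ofList_cons, map_mul]; rfl

lemma kmk_eq_km (a : FreeMonoid (Fin n)) : kmk n a = km (FreeMonoid.toList a) := rfl

lemma krel {a b : FreeMonoid (Fin n)} (h : KisRel n a b) : kmk n a = kmk n b :=
  Quotient.sound (ConGen.Rel.of _ _ h)

lemma km_exact {a b : List (Fin n)} (h : km a = km b) :
    ConGen.Rel (KisRel n) (FreeMonoid.ofList a) (FreeMonoid.ofList b) :=
  Quotient.exact h

lemma km_sound {a b : List (Fin n)}
    (h : ConGen.Rel (KisRel n) (FreeMonoid.ofList a) (FreeMonoid.ofList b)) :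
    km a = km b := Quotient.sound h

@[simp] lemma rel_idem (i : Fin n) : ka i * ka i = ka i := by
  have h := krel (KisRel.idem i)
  rw [map_mul] at h
  exact h

lemma rel_b1 {i j : Fin n} (h : i < j) : ka i * ka j * ka i = ka j * ka i := by
  have h := krel (KisRel.braid₁ h)
  rw [map_mul, map_mul] at h
  exact h

lemma rel_b2 {i j : Fin n} (h : i < j) : ka j * ka i * ka j = ka j * ka i := by
  have h := krel (KisRel.braid₂ h)
  rw [map_mul, map_mul] at h
  exact h

/-- right-assoc versions with a tail -/
lemma rel_idemz (i : Fin n) (z : Kiselman n) : ka i * (ka i * z) = ka i * z := by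
  rw [← mul_assoc, rel_idem]

lemma rel_b1z {i j : Fin n} (h : i < j) (z : Kiselman n) :
    ka i * (ka j * (ka i * z)) = ka j * (ka i * z) := by
  rw [← mul_assoc, ← mul_assoc, rel_b1 h, mul_assoc]

lemma rel_b2z {i j : Fin n} (h : i < j) (z : Kiselman n) :
    ka j * (ka i * (ka j * z)) = ka j * (ka i * z) := by
  rw [← mul_assoc, ← mul_assoc, rel_b2 h, mul_assoc]

/-- content invariance -/
lemma cont_sound {a b : FreeMonoid (Fin n)} (h : ConGen.Rel (KisRel n) a b) :
    (FreeMonoid.toList a).toFinset = (FreeMonoid.toList b).toFinset := by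
  induction h with
  | of x y hxy =>
    cases hxy with
    | idem i => ext k; simp [FreeMonoid.toList_mul, FreeMonoid.toList_of]
    | braid₁ h => ext k; simp [FreeMonoid.toList_mul, FreeMonoid.toList_of]; try tauto
    | braid₂ h => ext k; simp [FreeMonoid.toList_mul, FreeMonoid.toList_of]; try tauto
  | refl => rfl
  | symm _ ih => exact ih.symm
  | trans _ _ ih1 ih2 => exact ih1.trans ih2
  | mul _ _ ih1 ih2 => simp [FreeMonoid.toList_mul, List.toFinset_append, ih1, ih2]

lemma mem_of_rel {a b : FreeMonoid (Fin n)} (h : ConGen.Rel (KisRel n) a b) {i : Fin n}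
    (hi : i ∈ FreeMonoid.toList b) : i ∈ FreeMonoid.toList a := by
  have := cont_sound h
  rw [← List.mem_toFinset, this, List.mem_toFinset]; exact hi

end KisAux
namespace KisAux

variable {n : ℕ}

/-- remove all occurrences of `t` -/
def rm (t : Fin n) : List (Fin n) → List (Fin n)
  | [] => []
  | i :: w => if i = t then rm t w else i :: rm t w

lemma mem_rm {t i : Fin n} : ∀ {w : List (Fin n)}, i ∈ rm t w ↔ i ∈ w ∧ i ≠ t
  | [] => by simp [rm]
  | j :: w => by
    by_cases hj : j = t
    · subst hj; simp [rm, mem_rm (w := w)]; tauto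
    · simp [rm, hj, mem_rm (w := w)]; aesop

lemma rm_append (t : Fin n) : ∀ (a b : List (Fin n)), rm t (a ++ b) = rm t a ++ rm t b
  | [], b => rfl
  | i :: a, b => by by_cases hi : i = t <;> simp [rm, hi, rm_append t a b]

lemma rm_eq_self {t : Fin n} : ∀ {w : List (Fin n)}, t ∉ w → rm t w = w
  | [], _ => rfl
  | i :: w, h => by
    have hi : i ≠ t := fun hh => h (by simp [hh])
    simp only [rm, if_neg hi]
    rw [rm_eq_self (fun hw => h (List.mem_cons_of_mem _ hw))]

/-- suffix strictly after the first occurrence of `t` -/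
def aft (t : Fin n) : List (Fin n) → List (Fin n)
  | [] => []
  | i :: w => if i = t then w else aft t w

/-- prefix strictly before the first occurrence of `t` -/
def bef (t : Fin n) : List (Fin n) → List (Fin n)
  | [] => []
  | i :: w => if i = t then [] else i :: bef t w

lemma bef_aft {t : Fin n} : ∀ {w : List (Fin n)}, t ∈ w → w = bef t w ++ t :: aft t w
  | i :: w, h => by
    by_cases hi : i = t
    · subst hi; simp [bef, aft]
    · have hw : t ∈ w := by rcases List.mem_cons.mp h with h' | h'; exact absurd h'.symm hi; exact h'
      simp only [bef, aft, if_neg hi, List.cons_append]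
      rw [← bef_aft hw]

lemma mem_aft {t i : Fin n} : ∀ {w : List (Fin n)}, i ∈ aft t w → i ∈ w
  | j :: w, h => by
    by_cases hj : j = t
    · simp only [aft, if_pos hj] at h; exact List.mem_cons_of_mem _ h
    · simp only [aft, if_neg hj] at h; exact List.mem_cons_of_mem _ (mem_aft h)

lemma mem_bef {t i : Fin n} : ∀ {w : List (Fin n)}, i ∈ bef t w → i ∈ w
  | j :: w, h => by
    by_cases hj : j = t
    · simp [bef, if_pos hj] at h
    · simp only [bef, if_neg hj, List.mem_cons] at h
      rcases h with h | h
      · exact h ▸ List.mem_cons_self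
      · exact List.mem_cons_of_mem _ (mem_bef h)

lemma not_mem_bef (t : Fin n) : ∀ (w : List (Fin n)), t ∉ bef t w
  | [] => by simp [bef]
  | j :: w => by
    by_cases hj : j = t
    · simp [bef, if_pos hj]
    · simp only [bef, if_neg hj, List.mem_cons]
      rintro (h | h)
      · exact hj h.symm
      · exact not_mem_bef t w h

lemma aft_append_left {t : Fin n} : ∀ {w1 : List (Fin n)} (w2 : List (Fin n)), t ∈ w1 →
    aft t (w1 ++ w2) = aft t w1 ++ w2
  | i :: w1, w2, h => by
    by_cases hi : i = t
    · simp [aft, if_pos hi]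
    · have hw : t ∈ w1 := by rcases List.mem_cons.mp h with h' | h'; exact absurd h'.symm hi; exact h'
      simp only [List.cons_append, aft, if_neg hi]
      exact aft_append_left w2 hw

lemma aft_append_right {t : Fin n} : ∀ {w1 : List (Fin n)} (w2 : List (Fin n)), t ∉ w1 →
    aft t (w1 ++ w2) = aft t w2
  | [], w2, _ => rfl
  | i :: w1, w2, h => by
    have hi : i ≠ t := fun hh => h (by simp [hh])
    simp only [List.cons_append, aft, if_neg hi]
    exact aft_append_right w2 (fun hw => h (List.mem_cons_of_mem _ hw))

/-- deletion homomorphism -/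
def dl (t : Fin n) : Kiselman n →* Kiselman n :=
  PresentedMonoid.lift (fun i => if i = t then 1 else ka i) (by
    intro a b h
    cases h with
    | idem i =>
      by_cases hi : i = t <;> simp [map_mul, hi, FreeMonoid.lift_eval_of]
    | @braid₁ i j hij =>
      have hne : i ≠ j := ne_of_lt hij
      by_cases hi : i = t <;> by_cases hj : j = t <;>
        simp [map_mul, hi, hj, FreeMonoid.lift_eval_of] <;> first
          | exact absurd (hi.trans hj.symm) hne
          | exact rel_b1 hij
    | @braid₂ i j hij =>
      have hne : i ≠ j := ne_of_lt hij
      by_cases hi : i = t <;> by_cases hj : j = t <;>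
        simp [map_mul, hi, hj, FreeMonoid.lift_eval_of] <;> first
          | exact absurd (hi.trans hj.symm) hne
          | exact rel_b2 hij)

@[simp] lemma dl_ka (t i : Fin n) : dl t (ka i) = if i = t then 1 else ka i := rfl

lemma dl_km (t : Fin n) : ∀ (w : List (Fin n)), dl t (km w) = km (rm t w)
  | [] => by simp [rm]
  | i :: w => by
    by_cases hi : i = t <;> simp [rm, hi, map_mul, dl_km t w]

end KisAux
namespace KisAux

variable {n : ℕ}

/-- the invariant: `a_t` times the part strictly after the first `t`. -/
def phiw (t : Fin n) (w : List (Fin n)) : Kiselman n := ka t * km (aft t w)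

lemma Sprime (t : Fin n) : ∀ (w : List (Fin n)), (∀ i ∈ w, i ≤ t) →
    ka t * km w = ka t * km (rm t w)
  | [], _ => rfl
  | i :: w, h => by
    have hw : ∀ j ∈ w, j ≤ t := fun j hj => h j (List.mem_cons_of_mem _ hj)
    have ih := Sprime t w hw
    by_cases hi : i = t
    · subst hi; rw [km_cons, rel_idemz, ih]; simp [rm]
    · have hlt : i < t := lt_of_le_of_ne (h i List.mem_cons_self) hi
      simp only [rm, if_neg hi, km_cons]
      calc ka t * (ka i * km w) = ka t * (ka i * (ka t * km w)) := (rel_b2z hlt _).symm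
        _ = ka t * (ka i * (ka t * km (rm t w))) := by rw [ih]
        _ = ka t * (ka i * km (rm t w)) := rel_b2z hlt _

lemma phi_sound {t : Fin n} {a b : FreeMonoid (Fin n)} (h : ConGen.Rel (KisRel n) a b)
    (ha : ∀ i ∈ FreeMonoid.toList a, i ≤ t) :
    phiw t (FreeMonoid.toList a) = phiw t (FreeMonoid.toList b) := by
  induction h with
  | of x y hxy =>
    cases hxy with
    | idem i =>
      by_cases hi : i = t
      · subst hi
        show ka i * km (aft i [i, i]) = ka i * km (aft i [i])
        simp [aft, rel_idem]
      · show ka t * km (aft t [i, i]) = ka t * km (aft t [i])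
        simp [aft, hi]
    | @braid₁ i j hij =>
      have hi : i ≠ t := by
        intro hh; subst hh
        exact absurd (ha j (by show j ∈ [i,j,i]; simp)) (not_le.mpr hij)
      by_cases hj : j = t
      · subst hj
        show ka j * km (aft j [i, j, i]) = ka j * km (aft j [j, i])
        simp [aft, hi]
      · show ka t * km (aft t [i, j, i]) = ka t * km (aft t [j, i])
        simp [aft, hi, hj]
    | @braid₂ i j hij =>
      have hi : i ≠ t := by
        intro hh; subst hh
        exact absurd (ha j (by show j ∈ [j,i,j]; simp)) (not_le.mpr hij)
      by_cases hj : j = t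
      · subst hj
        show ka j * km (aft j [j, i, j]) = ka j * km (aft j [j, i])
        simp [aft, hi]
        rw [← mul_assoc, rel_b2 hij]
      · show ka t * km (aft t [j, i, j]) = ka t * km (aft t [j, i])
        simp [aft, hi, hj]
  | refl => rfl
  | @symm x y hxy ih =>
    exact (ih (fun i hi => ha i (mem_of_rel hxy.symm hi))).symm
  | @trans x y z h1 h2 ih1 ih2 =>
    have hy : ∀ i ∈ FreeMonoid.toList y, i ≤ t := fun i hi => ha i (mem_of_rel h1 hi)
    exact (ih1 ha).trans (ih2 hy)
  | @mul w x y z h1 h2 ih1 ih2 =>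
    have hw : ∀ i ∈ FreeMonoid.toList w, i ≤ t := by
      intro i hi; exact ha i (by rw [FreeMonoid.toList_mul]; exact List.mem_append_left _ hi)
    have hy : ∀ i ∈ FreeMonoid.toList y, i ≤ t := by
      intro i hi; exact ha i (by rw [FreeMonoid.toList_mul]; exact List.mem_append_right _ hi)
    have hky : km (FreeMonoid.toList y) = km (FreeMonoid.toList z) := Quotient.sound h2
    by_cases hmem : t ∈ FreeMonoid.toList w
    · have hmem' : t ∈ FreeMonoid.toList x := mem_of_rel h1.symm hmem
      show phiw t (FreeMonoid.toList w ++ FreeMonoid.toList y)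
         = phiw t (FreeMonoid.toList x ++ FreeMonoid.toList z)
      unfold phiw
      rw [aft_append_left _ hmem, aft_append_left _ hmem', km_append, km_append,
        ← mul_assoc, ← mul_assoc]
      have := ih1 hw
      unfold phiw at this
      rw [this, hky]
    · have hmem' : t ∉ FreeMonoid.toList x := fun hc => hmem (mem_of_rel h1 hc)
      show phiw t (FreeMonoid.toList w ++ FreeMonoid.toList y)
         = phiw t (FreeMonoid.toList x ++ FreeMonoid.toList z)
      unfold phiw
      rw [aft_append_right _ hmem, aft_append_right _ hmem']
      exact ih2 hy

end KisAux
namespace KisAux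

variable {n : ℕ}

lemma toFinset_eq_of_km_eq {a b : List (Fin n)} (h : km a = km b) :
    a.toFinset = b.toFinset := cont_sound (km_exact h)

lemma Rstar_aux : ∀ (N : ℕ) (X U V : List (Fin n)), X.toFinset.card ≤ N →
    km X * km U * km V = km X → km X * km U = km X := by
  intro N
  induction N with
  | zero =>
    intro X U V hcard heq
    have hX : X.toFinset = ∅ := Finset.card_eq_zero.mp (Nat.le_zero.mp hcard)
    have hXnil : X = [] := (List.toFinset_eq_empty_iff X).mp hX
    subst hXnil
    have heq' : km (U ++ V) = km ([] : List (Fin n)) := by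
      rw [km_append]; simpa using heq
    have hUV : (U ++ V).toFinset = ([] : List (Fin n)).toFinset := toFinset_eq_of_km_eq heq'
    simp only [List.toFinset_append, List.toFinset_nil, Finset.union_eq_empty] at hUV
    have hU : U = [] := (List.toFinset_eq_empty_iff U).mp hUV.1
    subst hU; simp
  | succ N ih =>
    intro X U V hcard heq
    by_cases hXe : X.toFinset = ∅
    · -- same as base case
      have hXnil : X = [] := (List.toFinset_eq_empty_iff X).mp hXe
      subst hXnil
      have heq' : km (U ++ V) = km ([] : List (Fin n)) := by
        rw [km_append]; simpa using heq
      have hUV : (U ++ V).toFinset = ([] : List (Fin n)).toFinset := toFinset_eq_of_km_eq heq'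
      simp only [List.toFinset_append, List.toFinset_nil, Finset.union_eq_empty] at hUV
      have hU : U = [] := (List.toFinset_eq_empty_iff U).mp hUV.1
      subst hU; simp
    · have hCne : X.toFinset.Nonempty := Finset.nonempty_of_ne_empty hXe
      set t := X.toFinset.max' hCne with ht
      have htX : t ∈ X := List.mem_toFinset.mp (X.toFinset.max'_mem hCne)
      -- the combined word equation
      have heq' : km (X ++ (U ++ V)) = km X := by
        rw [km_append, km_append, ← mul_assoc]; exact heq
      have hrel := km_exact heq'
      have hsub : (X ++ (U ++ V)).toFinset = X.toFinset := toFinset_eq_of_km_eq heq'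
      have hsubUV : (U ++ V).toFinset ⊆ X.toFinset := by
        rw [List.toFinset_append] at hsub
        exact Finset.union_eq_left.mp hsub
      have hmemX : ∀ i ∈ X, i ≤ t := fun i hi => Finset.le_max' _ _ (List.mem_toFinset.mpr hi)
      have hmemU : ∀ i ∈ U, i ≤ t := fun i hi => Finset.le_max' _ _
        (hsubUV (by simp [List.mem_toFinset.mpr, hi]))
      have hmemV : ∀ i ∈ V, i ≤ t := fun i hi => Finset.le_max' _ _
        (hsubUV (by simp [List.mem_toFinset.mpr, hi]))
      have hmemAll : ∀ i ∈ (X ++ (U ++ V)), i ≤ t := by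
        intro i hi
        rcases List.mem_append.mp hi with h1 | h1
        · exact hmemX i h1
        rcases List.mem_append.mp h1 with h2 | h2
        · exact hmemU i h2
        · exact hmemV i h2
      -- phi invariance
      have hphi := phi_sound hrel hmemAll
      have hphi' : ka t * km (aft t X) * km U * km V = ka t * km (aft t X) := by
        unfold phiw at hphi
        rw [show FreeMonoid.toList (FreeMonoid.ofList (X ++ (U ++ V))) = X ++ (U ++ V) from rfl,
          show FreeMonoid.toList (FreeMonoid.ofList X) = X from rfl,
          aft_append_left _ htX, km_append, km_append] at hphi
        simpa [mul_assoc] using hphi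
      -- delete t
      have hdel := congrArg (dl t) hphi'
      rw [map_mul, map_mul, map_mul, dl_km, dl_km, dl_km] at hdel
      simp only [dl_ka, if_pos rfl, if_true, one_mul] at hdel
      -- IH
      have hcard' : (rm t (aft t X)).toFinset.card ≤ N := by
        have hsub2 : (rm t (aft t X)).toFinset ⊆ X.toFinset.erase t := by
          intro i hi
          rw [List.mem_toFinset, mem_rm] at hi
          exact Finset.mem_erase.mpr ⟨hi.2, List.mem_toFinset.mpr (mem_aft hi.1)⟩
        have := Finset.card_le_card hsub2
        have hlt : (X.toFinset.erase t).card < X.toFinset.card :=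
          Finset.card_erase_lt_of_mem (X.toFinset.max'_mem hCne)
        omega
      have hIH := ih (rm t (aft t X)) (rm t U) (rm t V) hcard' hdel
      -- Phi * u = Phi
      have haftle : ∀ i ∈ aft t X, i ≤ t := fun i hi => hmemX i (mem_aft hi)
      have haftUle : ∀ i ∈ (aft t X ++ U), i ≤ t := by
        intro i hi
        rcases List.mem_append.mp hi with h1 | h1
        · exact haftle i h1
        · exact hmemU i h1
      have hPhiU : ka t * km (aft t X) * km U = ka t * km (aft t X) := by
        calc ka t * km (aft t X) * km U = ka t * km (aft t X ++ U) := by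
              rw [km_append, mul_assoc]
          _ = ka t * km (rm t (aft t X ++ U)) := Sprime t _ haftUle
          _ = ka t * (km (rm t (aft t X)) * km (rm t U)) := by
              rw [rm_append, km_append]
          _ = ka t * km (rm t (aft t X)) := by rw [hIH]
          _ = ka t * km (aft t X) := (Sprime t _ haftle).symm
      -- reconstruct x
      have hx : km X = km (bef t X) * (ka t * km (aft t X)) := by
        conv_lhs => rw [bef_aft htX]
        rw [km_append, km_cons]
      rw [hx, mul_assoc, hPhiU]

lemma Rstar (x u v : Kiselman n) (h : x * u * v = x) : x * u = x := by
  obtain ⟨X, rfl⟩ := PresentedMonoid.surjective_mk x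
  obtain ⟨U, rfl⟩ := PresentedMonoid.surjective_mk u
  obtain ⟨V, rfl⟩ := PresentedMonoid.surjective_mk v
  exact Rstar_aux (FreeMonoid.toList X).toFinset.card (FreeMonoid.toList X)
    (FreeMonoid.toList U) (FreeMonoid.toList V) le_rfl h

end KisAux
namespace KisAux

variable {n : ℕ}

/-- prefix strictly before the last occurrence of `b` -/
def befL (b : Fin n) (l : List (Fin n)) : List (Fin n) := (aft b l.reverse).reverse

/-- suffix strictly after the last occurrence of `b` -/
def afL (b : Fin n) (l : List (Fin n)) : List (Fin n) := (bef b l.reverse).reverse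

lemma befL_afL {b : Fin n} {l : List (Fin n)} (h : b ∈ l) :
    l = befL b l ++ b :: afL b l := by
  have h' : b ∈ l.reverse := List.mem_reverse.mpr h
  have := bef_aft h'
  have h2 := congrArg List.reverse this
  rw [List.reverse_reverse] at h2
  conv_lhs => rw [h2]
  rw [List.reverse_append, List.reverse_cons, List.append_assoc, List.singleton_append]
  rfl

lemma mem_befL {b i : Fin n} {l : List (Fin n)} (h : i ∈ befL b l) : i ∈ l := by
  rw [befL, List.mem_reverse] at h
  exact List.mem_reverse.mp (mem_aft h)

lemma mem_afL {b i : Fin n} {l : List (Fin n)} (h : i ∈ afL b l) : i ∈ l := by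
  rw [afL, List.mem_reverse] at h
  exact List.mem_reverse.mp (mem_bef h)

lemma not_mem_afL (b : Fin n) (l : List (Fin n)) : b ∉ afL b l := by
  rw [afL, List.mem_reverse]
  exact not_mem_bef b l.reverse

lemma befL_append_right {b : Fin n} (w1 : List (Fin n)) {w2 : List (Fin n)} (h : b ∈ w2) :
    befL b (w1 ++ w2) = w1 ++ befL b w2 := by
  unfold befL
  rw [List.reverse_append, aft_append_left _ (List.mem_reverse.mpr h), List.reverse_append,
    List.reverse_reverse]

lemma befL_append_left {b : Fin n} (w1 : List (Fin n)) {w2 : List (Fin n)} (h : b ∉ w2) :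
    befL b (w1 ++ w2) = befL b w1 := by
  unfold befL
  rw [List.reverse_append, aft_append_right _ (fun hc => h (List.mem_reverse.mp hc))]

/-- the mirror invariant -/
def psiw (b : Fin n) (w : List (Fin n)) : Kiselman n := km (befL b w) * ka b

lemma Sprime_b (b : Fin n) (w : List (Fin n)) (h : ∀ i ∈ w, b ≤ i) :
    km w * ka b = km (rm b w) * ka b := by
  induction w using List.reverseRecOn with
  | nil => rfl
  | append_singleton w i ih =>
    have hw : ∀ j ∈ w, b ≤ j := fun j hj => h j (by simp [hj])
    have ihw := ih hw
    by_cases hi : i = b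
    · subst hi
      have h1 : rm i (w ++ [i]) = rm i w := by rw [rm_append]; simp [rm]
      have h2 : km (w ++ [i]) = km w * ka i := by rw [km_append]; simp
      rw [h1, h2, mul_assoc, rel_idem, ihw]
    · have hlt : b < i := lt_of_le_of_ne (h i (by simp)) (Ne.symm hi)
      have h1 : rm b (w ++ [i]) = rm b w ++ [i] := by rw [rm_append]; simp [rm, hi]
      have h2 : km (w ++ [i]) = km w * ka i := by rw [km_append]; simp
      have h3 : km (rm b w ++ [i]) = km (rm b w) * ka i := by rw [km_append]; simp
      rw [h1, h2, h3]
      calc km w * ka i * ka b = km w * (ka i * ka b) := mul_assoc _ _ _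
        _ = km w * (ka b * ka i * ka b) := by rw [rel_b1 hlt]
        _ = km w * ka b * (ka i * ka b) := by rw [mul_assoc (ka b), ← mul_assoc]
        _ = km (rm b w) * ka b * (ka i * ka b) := by rw [ihw]
        _ = km (rm b w) * (ka b * ka i * ka b) := by rw [mul_assoc, ← mul_assoc (ka b)]
        _ = km (rm b w) * (ka i * ka b) := by rw [rel_b1 hlt]
        _ = km (rm b w) * ka i * ka b := (mul_assoc _ _ _).symm

lemma psi_sound {b : Fin n} {a c : FreeMonoid (Fin n)} (h : ConGen.Rel (KisRel n) a c)
    (ha : ∀ i ∈ FreeMonoid.toList a, b ≤ i) :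
    psiw b (FreeMonoid.toList a) = psiw b (FreeMonoid.toList c) := by
  induction h with
  | of x y hxy =>
    cases hxy with
    | idem i =>
      by_cases hi : i = b
      · subst hi
        show km (befL i [i, i]) * ka i = km (befL i [i]) * ka i
        simp [befL, aft, rel_idem]
      · show km (befL b [i, i]) * ka b = km (befL b [i]) * ka b
        simp [befL, aft, hi]
    | @braid₁ i j hij =>
      have hj : j ≠ b := by
        intro hh; subst hh
        exact absurd (ha i (by show i ∈ [i,j,i]; simp)) (not_le.mpr hij)
      by_cases hi : i = b
      · subst hi
        show km (befL i [i, j, i]) * ka i = km (befL i [j, i]) * ka i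
        simp [befL, aft, hj]
        rw [rel_b1 hij]
      · show km (befL b [i, j, i]) * ka b = km (befL b [j, i]) * ka b
        simp [befL, aft, hi, hj]
    | @braid₂ i j hij =>
      have hj : j ≠ b := by
        intro hh; subst hh
        exact absurd (ha i (by show i ∈ [j,i,j]; simp)) (not_le.mpr hij)
      by_cases hi : i = b
      · subst hi
        show km (befL i [j, i, j]) * ka i = km (befL i [j, i]) * ka i
        simp [befL, aft, hj]
      · show km (befL b [j, i, j]) * ka b = km (befL b [j, i]) * ka b
        simp [befL, aft, hi, hj]
  | refl => rfl
  | @symm x y hxy ih =>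
    exact (ih (fun i hi => ha i (mem_of_rel hxy.symm hi))).symm
  | @trans x y z h1 h2 ih1 ih2 =>
    have hy : ∀ i ∈ FreeMonoid.toList y, b ≤ i := fun i hi => ha i (mem_of_rel h1 hi)
    exact (ih1 ha).trans (ih2 hy)
  | @mul w x y z h1 h2 ih1 ih2 =>
    have hw : ∀ i ∈ FreeMonoid.toList w, b ≤ i := by
      intro i hi; exact ha i (by rw [FreeMonoid.toList_mul]; exact List.mem_append_left _ hi)
    have hy : ∀ i ∈ FreeMonoid.toList y, b ≤ i := by
      intro i hi; exact ha i (by rw [FreeMonoid.toList_mul]; exact List.mem_append_right _ hi)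
    have hkw : km (FreeMonoid.toList w) = km (FreeMonoid.toList x) := Quotient.sound h1
    by_cases hmem : b ∈ FreeMonoid.toList y
    · have hmem' : b ∈ FreeMonoid.toList z := mem_of_rel h2.symm hmem
      show psiw b (FreeMonoid.toList w ++ FreeMonoid.toList y)
         = psiw b (FreeMonoid.toList x ++ FreeMonoid.toList z)
      unfold psiw
      rw [befL_append_right _ hmem, befL_append_right _ hmem', km_append, km_append,
        mul_assoc, mul_assoc]
      have := ih2 hy
      unfold psiw at this
      rw [this, hkw]
    · have hmem' : b ∉ FreeMonoid.toList z := fun hc => hmem (mem_of_rel h2 hc)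
      show psiw b (FreeMonoid.toList w ++ FreeMonoid.toList y)
         = psiw b (FreeMonoid.toList x ++ FreeMonoid.toList z)
      unfold psiw
      rw [befL_append_left _ hmem, befL_append_left _ hmem']
      exact ih1 hw

end KisAux
namespace KisAux

variable {n : ℕ}

lemma Lstar_aux : ∀ (N : ℕ) (X U V : List (Fin n)), X.toFinset.card ≤ N →
    km V * km U * km X = km X → km U * km X = km X := by
  intro N
  induction N with
  | zero =>
    intro X U V hcard heq
    have hX : X.toFinset = ∅ := Finset.card_eq_zero.mp (Nat.le_zero.mp hcard)
    have hXnil : X = [] := (List.toFinset_eq_empty_iff X).mp hX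
    subst hXnil
    have heq' : km (V ++ U) = km ([] : List (Fin n)) := by
      rw [km_append]; simpa using heq
    have hUV : (V ++ U).toFinset = ([] : List (Fin n)).toFinset := toFinset_eq_of_km_eq heq'
    simp only [List.toFinset_append, List.toFinset_nil, Finset.union_eq_empty] at hUV
    have hU : U = [] := (List.toFinset_eq_empty_iff U).mp hUV.2
    subst hU; simp
  | succ N ih =>
    intro X U V hcard heq
    by_cases hXe : X.toFinset = ∅
    · have hXnil : X = [] := (List.toFinset_eq_empty_iff X).mp hXe
      subst hXnil
      have heq' : km (V ++ U) = km ([] : List (Fin n)) := by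
        rw [km_append]; simpa using heq
      have hUV : (V ++ U).toFinset = ([] : List (Fin n)).toFinset := toFinset_eq_of_km_eq heq'
      simp only [List.toFinset_append, List.toFinset_nil, Finset.union_eq_empty] at hUV
      have hU : U = [] := (List.toFinset_eq_empty_iff U).mp hUV.2
      subst hU; simp
    · have hCne : X.toFinset.Nonempty := Finset.nonempty_of_ne_empty hXe
      set b := X.toFinset.min' hCne with hb
      have hbX : b ∈ X := List.mem_toFinset.mp (X.toFinset.min'_mem hCne)
      have heq' : km (V ++ (U ++ X)) = km X := by
        rw [km_append, km_append, ← mul_assoc]; exact heq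
      have hrel := km_exact heq'
      have hsub : (V ++ (U ++ X)).toFinset = X.toFinset := toFinset_eq_of_km_eq heq'
      have hsubVU : V.toFinset ∪ U.toFinset ⊆ X.toFinset := by
        rw [List.toFinset_append, List.toFinset_append, ← Finset.union_assoc] at hsub
        intro i hi
        rw [← hsub]
        rcases Finset.mem_union.mp hi with h1 | h1
        · exact Finset.mem_union_left _ (Finset.mem_union_left _ h1)
        · exact Finset.mem_union_left _ (Finset.mem_union_right _ h1)
      have hmemX : ∀ i ∈ X, b ≤ i := fun i hi => Finset.min'_le _ _ (List.mem_toFinset.mpr hi)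
      have hmemU : ∀ i ∈ U, b ≤ i := fun i hi => Finset.min'_le _ _
        (hsubVU (Finset.mem_union_right _ (List.mem_toFinset.mpr hi)))
      have hmemV : ∀ i ∈ V, b ≤ i := fun i hi => Finset.min'_le _ _
        (hsubVU (Finset.mem_union_left _ (List.mem_toFinset.mpr hi)))
      have hmemAll : ∀ i ∈ (V ++ (U ++ X)), b ≤ i := by
        intro i hi
        rcases List.mem_append.mp hi with h1 | h1
        · exact hmemV i h1
        rcases List.mem_append.mp h1 with h2 | h2
        · exact hmemU i h2
        · exact hmemX i h2
      have hbUX : b ∈ U ++ X := List.mem_append_right _ hbX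
      -- psi invariance
      have hpsi := psi_sound hrel hmemAll
      have hpsi' : km V * (km U * (km (befL b X) * ka b)) = km (befL b X) * ka b := by
        unfold psiw at hpsi
        rw [show FreeMonoid.toList (FreeMonoid.ofList (V ++ (U ++ X))) = V ++ (U ++ X) from rfl,
          show FreeMonoid.toList (FreeMonoid.ofList X) = X from rfl,
          befL_append_right _ hbUX, befL_append_right _ hbX, km_append, km_append] at hpsi
        simpa [mul_assoc] using hpsi
      -- delete b
      have hdel := congrArg (dl b) hpsi'
      simp only [map_mul, dl_km, dl_ka, if_pos rfl, if_true, mul_one] at hdel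
      have hdel' : km (rm b V) * km (rm b U) * km (rm b (befL b X)) = km (rm b (befL b X)) := by
        rw [mul_assoc]; simpa using hdel
      have hcard' : (rm b (befL b X)).toFinset.card ≤ N := by
        have hsub2 : (rm b (befL b X)).toFinset ⊆ X.toFinset.erase b := by
          intro i hi
          rw [List.mem_toFinset, mem_rm] at hi
          exact Finset.mem_erase.mpr ⟨hi.2, List.mem_toFinset.mpr (mem_befL hi.1)⟩
        have := Finset.card_le_card hsub2
        have hlt : (X.toFinset.erase b).card < X.toFinset.card :=
          Finset.card_erase_lt_of_mem (X.toFinset.min'_mem hCne)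
        omega
      have hIH := ih (rm b (befL b X)) (rm b U) (rm b V) hcard' hdel'
      -- u * Psi = Psi
      have hbefle : ∀ i ∈ befL b X, b ≤ i := fun i hi => hmemX i (mem_befL hi)
      have hUbefle : ∀ i ∈ (U ++ befL b X), b ≤ i := by
        intro i hi
        rcases List.mem_append.mp hi with h1 | h1
        · exact hmemU i h1
        · exact hbefle i h1
      have hUPsi : km U * (km (befL b X) * ka b) = km (befL b X) * ka b := by
        calc km U * (km (befL b X) * ka b) = km (U ++ befL b X) * ka b := by
              rw [km_append, mul_assoc]
          _ = km (rm b (U ++ befL b X)) * ka b := Sprime_b b _ hUbefle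
          _ = km (rm b U) * km (rm b (befL b X)) * ka b := by
              rw [rm_append, km_append]
          _ = km (rm b (befL b X)) * ka b := by rw [hIH]
          _ = km (befL b X) * ka b := (Sprime_b b _ hbefle).symm
      -- reconstruct x
      have hx : km X = (km (befL b X) * ka b) * km (afL b X) := by
        conv_lhs => rw [befL_afL hbX]
        rw [km_append, km_cons, ← mul_assoc]
      rw [hx, ← mul_assoc, ← mul_assoc, mul_assoc (km U) (km (befL b X)) (ka b), hUPsi]

lemma Lstar (x u v : Kiselman n) (h : v * u * x = x) : u * x = x := by
  obtain ⟨X, rfl⟩ := PresentedMonoid.surjective_mk x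
  obtain ⟨U, rfl⟩ := PresentedMonoid.surjective_mk u
  obtain ⟨V, rfl⟩ := PresentedMonoid.surjective_mk v
  exact Lstar_aux (FreeMonoid.toList X).toFinset.card (FreeMonoid.toList X)
    (FreeMonoid.toList U) (FreeMonoid.toList V) le_rfl h

end KisAux

namespace KisAux

variable {n : ℕ}

lemma finite_aux : ∀ (N : ℕ) (C : Finset (Fin n)), C.card ≤ N →
    {x : Kiselman n | ∃ w : List (Fin n), w.toFinset ⊆ C ∧ km w = x}.Finite := by
  intro N
  induction N with
  | zero =>
    intro C hcard
    have hC : C = ∅ := Finset.card_eq_zero.mp (Nat.le_zero.mp hcard)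
    subst hC
    apply Set.Finite.subset (Set.finite_singleton (1 : Kiselman n))
    rintro x ⟨w, hw, rfl⟩
    have : w = [] := (List.toFinset_eq_empty_iff w).mp (Finset.subset_empty.mp hw)
    subst this; simp
  | succ N ih =>
    intro C hcard
    by_cases hCe : C = ∅
    · subst hCe
      apply Set.Finite.subset (Set.finite_singleton (1 : Kiselman n))
      rintro x ⟨w, hw, rfl⟩
      have : w = [] := (List.toFinset_eq_empty_iff w).mp (Finset.subset_empty.mp hw)
      subst this; simp
    · have hCne : C.Nonempty := Finset.nonempty_of_ne_empty hCe
      set t := C.max' hCne with ht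
      have htC : t ∈ C := C.max'_mem hCne
      have hC' : (C.erase t).card ≤ N := by
        have := Finset.card_erase_lt_of_mem htC
        omega
      have hS1 := ih (C.erase t) hC'
      apply Set.Finite.subset (hS1.union ((hS1.prod hS1).image
        (fun p : Kiselman n × Kiselman n => p.1 * (ka t * p.2))))
      rintro x ⟨w, hw, rfl⟩
      by_cases htw : t ∈ w
      · right
        have hle : ∀ i ∈ aft t w, i ≤ t := by
          intro i hi
          exact Finset.le_max' _ _ (hw (List.mem_toFinset.mpr (mem_aft hi)))
        have hkm : km w = km (bef t w) * (ka t * km (rm t (aft t w))) := by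
          conv_lhs => rw [bef_aft htw]
          rw [km_append, km_cons, ← Sprime t _ hle]
        refine ⟨(km (bef t w), km (rm t (aft t w))), ?_, hkm.symm⟩
        constructor
        · refine ⟨bef t w, ?_, rfl⟩
          intro i hi
          rw [List.mem_toFinset] at hi
          refine Finset.mem_erase.mpr ⟨?_, hw (List.mem_toFinset.mpr (mem_bef hi))⟩
          intro hit; exact not_mem_bef t w (hit ▸ hi)
        · refine ⟨rm t (aft t w), ?_, rfl⟩
          intro i hi
          rw [List.mem_toFinset, mem_rm] at hi
          exact Finset.mem_erase.mpr ⟨hi.2, hw (List.mem_toFinset.mpr (mem_aft hi.1))⟩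
      · left
        refine ⟨w, ?_, rfl⟩
        intro i hi
        refine Finset.mem_erase.mpr ⟨?_, hw hi⟩
        intro hit
        exact htw (hit ▸ List.mem_toFinset.mp hi)

lemma kis_finite : Finite (Kiselman n) := by
  have h := finite_aux (Finset.univ : Finset (Fin n)).card Finset.univ le_rfl
  have heq : {x : Kiselman n | ∃ w : List (Fin n), w.toFinset ⊆ Finset.univ ∧ km w = x}
      = Set.univ := by
    ext x
    simp only [Set.mem_setOf_eq, Set.mem_univ, iff_true]
    obtain ⟨W, rfl⟩ := PresentedMonoid.surjective_mk x
    exact ⟨FreeMonoid.toList W, Finset.subset_univ _, rfl⟩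
  rw [heq] at h
  exact Set.finite_univ_iff.mp h

lemma exists_idem_pow (g : Kiselman n) : ∃ k : ℕ, 0 < k ∧ g ^ k * g ^ k = g ^ k := by
  have : Finite (Kiselman n) := kis_finite
  obtain ⟨i, j, hne, heq⟩ := Finite.exists_ne_map_eq_of_infinite (fun k : ℕ => g ^ k)
  suffices h : ∀ i j : ℕ, i < j → g ^ i = g ^ j → ∃ k, 0 < k ∧ g ^ k * g ^ k = g ^ k by
    rcases lt_or_gt_of_ne hne with h1 | h1
    · exact h i j h1 heq
    · exact h j i h1 heq.symm
  clear hne heq i j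
  intro i j hij heq
  have hd : 0 < j - i := by omega
  have step : ∀ m : ℕ, i ≤ m → g ^ m = g ^ (m + (j - i)) := by
    intro m hm
    calc g ^ m = g ^ (i + (m - i)) := by congr 1; omega
      _ = g ^ i * g ^ (m - i) := pow_add g i (m - i)
      _ = g ^ j * g ^ (m - i) := by rw [heq]
      _ = g ^ (j + (m - i)) := (pow_add g j (m - i)).symm
      _ = g ^ (m + (j - i)) := by congr 1; omega
  have iter : ∀ (c m : ℕ), i ≤ m → g ^ m = g ^ (m + c * (j - i)) := by
    intro c
    induction c with
    | zero => intro m _; simp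
    | succ c ihc =>
      intro m hm
      rw [ihc m hm, step (m + c * (j - i)) (by omega)]
      congr 1; ring
  refine ⟨(i + 1) * (j - i), Nat.mul_pos (by omega) hd, ?_⟩
  rw [← pow_add]
  have hk : i ≤ (i + 1) * (j - i) := by nlinarith
  have := iter (i + 1) ((i + 1) * (j - i)) hk
  rw [← this]

lemma Jtriv (x y a b c d : Kiselman n) (hab : a * x * b = y) (hcd : c * y * d = x) : x = y := by
  have hx : (c * a) * x * (b * d) = x := by
    have hass : (c * a) * x * (b * d) = c * (a * x * b) * d := by simp only [mul_assoc]
    rw [hass, hab, hcd]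
  have hpow : ∀ k : ℕ, (c * a) ^ k * x * (b * d) ^ k = x := by
    intro k
    induction k with
    | zero => simp
    | succ k ihk =>
      have hstep : (c * a) ^ (k + 1) * x * (b * d) ^ (k + 1)
          = (c * a) ^ k * ((c * a) * x * (b * d)) * (b * d) ^ k := by
        rw [pow_succ, pow_succ']
        simp only [mul_assoc]
      rw [hstep, hx, ihk]
  obtain ⟨ks, hks, hkse⟩ := exists_idem_pow (c * a)
  obtain ⟨kr, hkr, hkre⟩ := exists_idem_pow (b * d)
  have h1 : (c * a) ^ ks * x = x := by
    conv_rhs => rw [← hpow ks]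
    conv_lhs => rw [← hpow ks]
    rw [← mul_assoc, ← mul_assoc, hkse]
  have h2 : x * (b * d) ^ kr = x := by
    conv_rhs => rw [← hpow kr]
    conv_lhs => rw [← hpow kr]
    rw [mul_assoc, hkre]
  have hax : a * x = x := by
    obtain ⟨m, rfl⟩ : ∃ m, ks = m + 1 := ⟨ks - 1, by omega⟩
    have hh : ((c * a) ^ m * c) * a * x = x := by
      calc ((c * a) ^ m * c) * a * x = (c * a) ^ (m + 1) * x := by
            rw [pow_succ]; simp only [mul_assoc]
        _ = x := h1
    exact Lstar x a ((c * a) ^ m * c) hh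
  have hxb : x * b = x := by
    obtain ⟨m, rfl⟩ : ∃ m, kr = m + 1 := ⟨kr - 1, by omega⟩
    have hh : x * b * (d * (b * d) ^ m) = x := by
      calc x * b * (d * (b * d) ^ m) = x * (b * d) ^ (m + 1) := by
            rw [pow_succ']; simp only [mul_assoc]
        _ = x := h2
    exact Rstar x b (d * (b * d) ^ m) hh
  rw [← hab, hax, hxb]

end KisAux



/-- Theorem 4: all of Green's relations `L`, `R`, `H`, `D`, `J` on `K_n` are trivial. -/
theorem kiselman_greens_relations_trivial (n : ℕ) (x y : Kiselman n) :
    (((∃ a, a * x = y) ∧ (∃ b, b * y = x)) → x = y) ∧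
    (((∃ a, x * a = y) ∧ (∃ b, y * b = x)) → x = y) ∧
    ((((∃ a, a * x = y) ∧ (∃ b, b * y = x)) ∧
      ((∃ a, x * a = y) ∧ (∃ b, y * b = x))) → x = y) ∧
    ((∃ z : Kiselman n, ((∃ a, a * x = z) ∧ (∃ b, b * z = x)) ∧
      ((∃ a, z * a = y) ∧ (∃ b, y * b = z))) → x = y) ∧
    (((∃ a b, a * x * b = y) ∧ (∃ c d, c * y * d = x)) → x = y) := by
  have hL : ∀ (x y : Kiselman n), ((∃ a, a * x = y) ∧ (∃ b, b * y = x)) → x = y := by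
    rintro x y ⟨⟨a, ha⟩, ⟨b, hb⟩⟩
    have h : b * a * x = x := by rw [mul_assoc, ha, hb]
    rw [← ha]; exact (KisAux.Lstar x a b h).symm
  have hR : ∀ (x y : Kiselman n), ((∃ a, x * a = y) ∧ (∃ b, y * b = x)) → x = y := by
    rintro x y ⟨⟨a, ha⟩, ⟨b, hb⟩⟩
    have h : x * a * b = x := by rw [ha, hb]
    rw [← ha]; exact (KisAux.Rstar x a b h).symm
  refine ⟨hL x y, hR x y, fun h => hL x y h.1, ?_, ?_⟩
  · rintro ⟨z, h1, h2⟩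
    exact (hL x z h1).trans (hR z y h2)
  · rintro ⟨⟨a, b, hab⟩, ⟨c, d, hcd⟩⟩
    exact KisAux.Jtriv x y a b c d hab hcd
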